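/- arXiv:0910.5157 — 4 statements merged into one kernel-verified Lean document; each statement's English description precedes it below -/
import Mathlib

section
/- Let p(ξ) = βξ³ - αξ|ξ| + γξ with α, β, γ real and |α| ≤ 1, β = 1. If ξ₁ + ξ₂ + ξ₃ + ξ₄ = 0, max(|ξ₁|,|ξ₂|,|ξ₃|,|ξ₄|) ≥ C for a sufficiently large absolute constant C, then |p(ξ₁)+p(ξ₂)+p(ξ₃)+p(ξ₄)| is comparable (with absolute implicit constants) to |(ξ₁+ξ₂)(ξ₁+ξ₃)(ξ₂+ξ₃)|. -/
set_option maxHeartbeats 2000000 in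
lemma keyL (x y z w : ℝ) (h : x + y + z + w = 0) :
    abs (x * |x| + y * |y| + z * |z| + w * |w|) ≤ 2 * |(x + z) * (y + z)| := by
  have hw : w = -(x + y + z) := by linarith
  subst hw
  have h1 : (x + z) * (y + z) ≤ |(x + z) * (y + z)| := le_abs_self _
  have h2 : -((x + z) * (y + z)) ≤ |(x + z) * (y + z)| := neg_le_of_neg_le (neg_abs_le _)
  rw [abs_le]
  rcases abs_cases x with ⟨hx, hx'⟩ | ⟨hx, hx'⟩ <;>
    rcases abs_cases y with ⟨hy, hy'⟩ | ⟨hy, hy'⟩ <;>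
    rcases abs_cases z with ⟨hz, hz'⟩ | ⟨hz, hz'⟩ <;>
    rcases abs_cases (-(x + y + z)) with ⟨hs, hs'⟩ | ⟨hs, hs'⟩ <;>
    rw [hx, hy, hz, hs] <;>
    constructor <;>
    nlinarith [h1, h2, sq_nonneg (x + z), sq_nonneg (y + z), sq_nonneg (x - y),
      sq_nonneg (x + y + 2*z), sq_nonneg (x + y + z), sq_nonneg x, sq_nonneg y, sq_nonneg z,
      abs_nonneg ((x + z) * (y + z))]

theorem stmt3 : ∃ C₀ > (0:ℝ), ∃ C₁ > (0:ℝ),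
    ∀ α γ ξ₁ ξ₂ ξ₃ ξ₄ : ℝ, |α| ≤ 1 →
    ξ₁ + ξ₂ + ξ₃ + ξ₄ = 0 →
    C₀ ≤ max |ξ₁| (max |ξ₂| (max |ξ₃| |ξ₄|)) →
    (let p : ℝ → ℝ := fun ξ => ξ ^ 3 - α * ξ * |ξ| + γ * ξ
     |(ξ₁ + ξ₂) * (ξ₁ + ξ₃) * (ξ₂ + ξ₃)| / C₁ ≤ |p ξ₁ + p ξ₂ + p ξ₃ + p ξ₄| ∧
     |p ξ₁ + p ξ₂ + p ξ₃ + p ξ₄| ≤ C₁ * |(ξ₁ + ξ₂) * (ξ₁ + ξ₃) * (ξ₂ + ξ₃)|) := by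
  refine ⟨3, by norm_num, 4, by norm_num, ?_⟩
  intro α γ ξ₁ ξ₂ ξ₃ ξ₄ hα hsum hC
  have h4 : ξ₄ = -(ξ₁ + ξ₂ + ξ₃) := by linarith
  subst h4
  -- abbreviations
  set Q : ℝ := ξ₁ * |ξ₁| + ξ₂ * |ξ₂| + ξ₃ * |ξ₃| +
      (-(ξ₁ + ξ₂ + ξ₃)) * |(-(ξ₁ + ξ₂ + ξ₃))| with hQdef
  have hbc := keyL ξ₁ ξ₂ ξ₃ (-(ξ₁ + ξ₂ + ξ₃)) (by ring)
  have hab := keyL ξ₂ ξ₃ ξ₁ (-(ξ₁ + ξ₂ + ξ₃)) (by ring)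
  have hac := keyL ξ₁ ξ₃ ξ₂ (-(ξ₁ + ξ₂ + ξ₃)) (by ring)
  rw [show ξ₂ * |ξ₂| + ξ₃ * |ξ₃| + ξ₁ * |ξ₁| +
      (-(ξ₁ + ξ₂ + ξ₃)) * |(-(ξ₁ + ξ₂ + ξ₃))| = Q from by rw [hQdef]; ring,
    show (ξ₂ + ξ₁) * (ξ₃ + ξ₁) = (ξ₁ + ξ₂) * (ξ₁ + ξ₃) from by ring] at hab
  rw [show ξ₁ * |ξ₁| + ξ₃ * |ξ₃| + ξ₂ * |ξ₂| +
      (-(ξ₁ + ξ₂ + ξ₃)) * |(-(ξ₁ + ξ₂ + ξ₃))| = Q from by rw [hQdef]; ring,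
    show (ξ₁ + ξ₂) * (ξ₃ + ξ₂) = (ξ₁ + ξ₂) * (ξ₂ + ξ₃) from by ring] at hac
  rw [← hQdef] at hbc
  rw [abs_mul] at hbc hab hac
  set nA := |ξ₁ + ξ₂| with hA
  set nB := |ξ₁ + ξ₃| with hB
  set nC := |ξ₂ + ξ₃| with hCdef
  have hA0 : 0 ≤ nA := abs_nonneg _
  have hB0 : 0 ≤ nB := abs_nonneg _
  have hC0 : 0 ≤ nC := abs_nonneg _
  have hQ0 : 0 ≤ |Q| := abs_nonneg _
  -- 2|ξ_i| ≤ nA + nB + nC for each i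
  have m1 : 2 * |ξ₁| ≤ nA + nB + nC := by
    have h1 := abs_add_le (ξ₁ + ξ₂) (ξ₁ + ξ₃)
    have h2 := abs_add_le ((ξ₁ + ξ₂) + (ξ₁ + ξ₃)) (-(ξ₂ + ξ₃))
    rw [abs_neg] at h2
    rw [show (ξ₁ + ξ₂) + (ξ₁ + ξ₃) + -(ξ₂ + ξ₃) = 2 * ξ₁ from by ring] at h2
    rw [show |(2:ℝ) * ξ₁| = 2 * |ξ₁| from by rw [abs_mul]; norm_num] at h2
    linarith
  have m2 : 2 * |ξ₂| ≤ nA + nB + nC := by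
    have h1 := abs_add_le (ξ₁ + ξ₂) (-(ξ₁ + ξ₃))
    have h2 := abs_add_le ((ξ₁ + ξ₂) + -(ξ₁ + ξ₃)) (ξ₂ + ξ₃)
    rw [abs_neg] at h1
    rw [show (ξ₁ + ξ₂) + -(ξ₁ + ξ₃) + (ξ₂ + ξ₃) = 2 * ξ₂ from by ring] at h2
    rw [show |(2:ℝ) * ξ₂| = 2 * |ξ₂| from by rw [abs_mul]; norm_num] at h2
    linarith
  have m3 : 2 * |ξ₃| ≤ nA + nB + nC := by
    have h1 := abs_add_le (-(ξ₁ + ξ₂)) (ξ₁ + ξ₃)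
    have h2 := abs_add_le (-(ξ₁ + ξ₂) + (ξ₁ + ξ₃)) (ξ₂ + ξ₃)
    rw [abs_neg] at h1
    rw [show -(ξ₁ + ξ₂) + (ξ₁ + ξ₃) + (ξ₂ + ξ₃) = 2 * ξ₃ from by ring] at h2
    rw [show |(2:ℝ) * ξ₃| = 2 * |ξ₃| from by rw [abs_mul]; norm_num] at h2
    linarith
  have m4 : 2 * |(-(ξ₁ + ξ₂ + ξ₃))| ≤ nA + nB + nC := by
    have h1 := abs_add_le (ξ₁ + ξ₂) (ξ₁ + ξ₃)
    have h2 := abs_add_le ((ξ₁ + ξ₂) + (ξ₁ + ξ₃)) (ξ₂ + ξ₃)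
    rw [show (ξ₁ + ξ₂) + (ξ₁ + ξ₃) + (ξ₂ + ξ₃) = 2 * (ξ₁ + ξ₂ + ξ₃) from by ring] at h2
    rw [show |(2:ℝ) * (ξ₁ + ξ₂ + ξ₃)| = 2 * |(-(ξ₁ + ξ₂ + ξ₃))| from by
      rw [abs_mul, abs_neg]; norm_num] at h2
    linarith
  -- nA + nB + nC ≥ 6
  have hsum6 : 6 ≤ nA + nB + nC := by
    have : max |ξ₁| (max |ξ₂| (max |ξ₃| |(-(ξ₁ + ξ₂ + ξ₃))|)) ≤ (nA + nB + nC) / 2 := by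
      apply max_le (by linarith)
      apply max_le (by linarith)
      apply max_le (by linarith) (by linarith)
    linarith
  -- |Q| ≤ nA * nB * nC
  have hQP : |Q| ≤ nA * nB * nC := by
    rcases le_total nA (max nB nC) with hmA | hmA
    · rcases le_total nB nC with hmB | hmB
      · -- nC is the max, nC ≥ 2
        have h2C : 2 ≤ nC := by
          rw [max_eq_right hmB] at hmA; linarith
        nlinarith [hab, mul_nonneg hA0 hB0]
      · have h2B : 2 ≤ nB := by
          rw [max_eq_left hmB] at hmA; linarith
        nlinarith [hac, mul_nonneg hA0 hC0]
    · have h2A : 2 ≤ nA := by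
        have := le_max_left nB nC; have := le_max_right nB nC
        rcases le_total nB nC with h | h
        · rw [max_eq_right h] at hmA; linarith
        · rw [max_eq_left h] at hmA; linarith
      nlinarith [hbc, mul_nonneg hB0 hC0]
  -- assemble
  dsimp only
  have hPabs : |(ξ₁ + ξ₂) * (ξ₁ + ξ₃) * (ξ₂ + ξ₃)| = nA * nB * nC := by
    rw [abs_mul, abs_mul]
  have hαQ : |α * Q| ≤ |Q| := by
    rw [abs_mul]
    calc |α| * |Q| ≤ 1 * |Q| := mul_le_mul_of_nonneg_right hα hQ0
    _ = |Q| := one_mul _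
  set P : ℝ := (ξ₁ + ξ₂) * (ξ₁ + ξ₃) * (ξ₂ + ξ₃) with hPdef
  have h3P : |(-(3 * P))| = 3 * (nA * nB * nC) := by
    rw [abs_neg, abs_mul, hPdef, hPabs]; norm_num
  have key : ∀ E : ℝ, E = -(3 * P) - α * Q →
      |P| / 4 ≤ |E| ∧ |E| ≤ 4 * |P| := by
    intro E hE
    have hup : |E| ≤ |(-(3 * P))| + |α * Q| := by
      rw [hE, sub_eq_add_neg]
      calc |(-(3 * P)) + -(α * Q)| ≤ |(-(3 * P))| + |(-(α * Q))| := abs_add_le _ _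
      _ = |(-(3 * P))| + |α * Q| := by rw [abs_neg (α * Q)]
    have hlo : |(-(3 * P))| - |α * Q| ≤ |E| := by
      rw [hE]; exact abs_sub_abs_le_abs_sub _ _
    rw [h3P] at hup hlo
    rw [hPdef] at hPabs ⊢
    constructor <;> [skip; skip] <;> rw [hPabs] <;> linarith
  exact key _ (by rw [hQdef, hPdef]; ring)
end

section
/- Let a : ℝ → ℝ be twice continuously differentiable. If |η| ≤ |ξ|/4 and |λ| ≤ |ξ|/4, then |a(ξ+η+λ) - a(ξ+η) - a(ξ+λ) + a(ξ)| ≤ |η||λ| · sup_{|ξ'| ∈ [|ξ|/2, 2|ξ|]} |a''(ξ')|. -/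
theorem stmt5 (a : ℝ → ℝ) (ha : ContDiff ℝ 2 a) (ξ η l K : ℝ)
    (hη : |η| ≤ |ξ| / 4) (hl : |l| ≤ |ξ| / 4)
    (hK : ∀ ξ' : ℝ, |ξ| / 2 ≤ |ξ'| → |ξ'| ≤ 2 * |ξ| → |deriv (deriv a) ξ'| ≤ K) :
    |a (ξ + η + l) - a (ξ + η) - a (ξ + l) + a ξ| ≤ |η| * |l| * K := by
  have h2 : ((2 : ℕ) : WithTop ℕ∞) = (1 : ℕ∞) + 1 := by norm_num
  have hd1 : Differentiable ℝ a := ha.differentiable (by norm_num)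
  have hd2 : Differentiable ℝ (deriv a) := by
    have h : ContDiff ℝ ((1 + 1 : ℕ) : WithTop ℕ∞) a := ha.of_le (by norm_num)
    have := ContDiff.iterate_deriv' 1 1 h
    rw [Function.iterate_one] at this
    exact this.differentiable (by norm_num)
  -- annulus bound
  have hK' : ∀ x : ℝ, |x - ξ| ≤ |ξ| / 2 → |deriv (deriv a) x| ≤ K := by
    intro x hx
    have h1 : |ξ| - |x| ≤ |x - ξ| := by
      have := abs_sub_abs_le_abs_sub ξ x
      rwa [abs_sub_comm ξ x] at this
    have h2' : |x| - |ξ| ≤ |x - ξ| := abs_sub_abs_le_abs_sub x ξ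
    exact hK x (by linarith) (by linarith)
  have hK0 : 0 ≤ K := le_trans (abs_nonneg _) (hK ξ (by linarith [abs_nonneg ξ]) (by linarith [abs_nonneg ξ]))
  -- inner mean value: for |s| ≤ |η|
  have inner : ∀ s : ℝ, |s| ≤ |η| →
      |deriv a (ξ + s + l) - deriv a (ξ + s)| ≤ K * |l| := by
    intro s hs
    have hmem : ∀ z ∈ Set.uIcc (ξ + s) (ξ + s + l), |deriv (deriv a) z| ≤ K := by
      intro z hz
      apply hK'
      have hd : dist z (ξ + s) ≤ dist (ξ + s) (ξ + s + l) :=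
        Real.dist_le_of_mem_uIcc hz (Set.left_mem_uIcc)
      rw [Real.dist_eq, Real.dist_eq] at hd
      have hdl : |z - (ξ + s)| ≤ |l| := by
        have : |ξ + s - (ξ + s + l)| = |l| := by rw [show ξ + s - (ξ + s + l) = -l by ring, abs_neg]
        linarith [hd, this.le, this.ge]
      have : |z - ξ| ≤ |z - (ξ + s)| + |s| := by
        have := abs_add_le (z - (ξ + s)) s
        simpa [show z - (ξ + s) + s = z - ξ by ring] using this
      linarith
    have := Convex.norm_image_sub_le_of_norm_deriv_le (𝕜 := ℝ) (f := deriv a)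
      (s := Set.uIcc (ξ + s) (ξ + s + l)) (fun x _ => hd2 x) hmem (convex_uIcc _ _)
      Set.left_mem_uIcc Set.right_mem_uIcc
    simpa [Real.norm_eq_abs, show ξ + s + l - (ξ + s) = l by ring] using this
  -- outer function
  set F : ℝ → ℝ := fun s => a (ξ + s + l) - a (ξ + s) with hF
  have hFd : ∀ s : ℝ, HasDerivAt F (deriv a (ξ + s + l) - deriv a (ξ + s)) s := by
    intro s
    have h1 : HasDerivAt (fun s : ℝ => a (ξ + s + l)) (deriv a (ξ + s + l)) s := by
      have hin : HasDerivAt (fun s : ℝ => ξ + s + l) 1 s := by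
        simpa using ((hasDerivAt_id s).const_add ξ).add_const l
      simpa [Function.comp_def] using (hd1 (ξ + s + l)).hasDerivAt.comp s hin
    have h2' : HasDerivAt (fun s : ℝ => a (ξ + s)) (deriv a (ξ + s)) s := by
      have hin : HasDerivAt (fun s : ℝ => ξ + s) 1 s := by
        simpa using (hasDerivAt_id s).const_add ξ
      simpa [Function.comp_def] using (hd1 (ξ + s)).hasDerivAt.comp s hin
    exact h1.sub h2'
  have hbound : ∀ s ∈ Set.uIcc (0 : ℝ) η, ‖deriv F s‖ ≤ K * |l| := by
    intro s hs
    rw [(hFd s).deriv]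
    have hd : dist s 0 ≤ dist (0 : ℝ) η := Real.dist_le_of_mem_uIcc hs Set.left_mem_uIcc
    simp only [Real.dist_eq, sub_zero, zero_sub, abs_neg] at hd
    exact inner s hd
  have key := Convex.norm_image_sub_le_of_norm_deriv_le (𝕜 := ℝ) (f := F)
    (s := Set.uIcc (0 : ℝ) η) (fun x _ => (hFd x).differentiableAt) hbound (convex_uIcc _ _)
    Set.left_mem_uIcc Set.right_mem_uIcc
  have : |a (ξ + η + l) - a (ξ + η) - a (ξ + l) + a ξ| = |F η - F 0| := by
    simp only [hF]; ring_nf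
  rw [this]
  calc |F η - F 0| ≤ K * |l| * |η - 0| := by simpa [Real.norm_eq_abs] using key
    _ = |η| * |l| * K := by rw [sub_zero]; ring
end

section
/- For N ≥ 1 and s ∈ [-3/4, 0], let m(ξ) = min(1, N^{-s}|ξ|^s) for ξ ≠ 0 (m(0)=1). Then for every dyadic pair λ ≤ μ and real numbers ξ₁, ξ₂, ξ₃ with ξ₁+ξ₂+ξ₃=0, |ξ₁| ∼ λ, |ξ₂|,|ξ₃| ∼ μ, and μ ≥ 1, one has |m²(ξ₁)ξ₁ + m²(ξ₂)ξ₂ + m²(ξ₃)ξ₃| ≤ C m²(λ) λ, where C depends only on s. -/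
lemma tangent_rpow_stmt16 {p x y : ℝ} (hp : p ≤ 0) (hx : 0 < x) (hxy : x ≤ y) :
    x ^ p - y ^ p ≤ (-p) * (x ^ p / x) * (y - x) := by
  have hy : 0 < y := hx.trans_le hxy
  have ht : (0:ℝ) < y / x := by positivity
  have ht1 : (1:ℝ) ≤ y / x := (one_le_div hx).2 hxy
  have hlog : Real.log (y / x) ≤ y / x - 1 := Real.log_le_sub_one_of_pos ht
  have hlog0 : 0 ≤ Real.log (y / x) := Real.log_nonneg ht1
  have hexp : 1 + p * Real.log (y / x) ≤ (y / x) ^ p := by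
    rw [Real.rpow_def_of_pos ht]
    have h := Real.add_one_le_exp (Real.log (y / x) * p)
    linarith [h]
  have hsplit : y ^ p = x ^ p * (y / x) ^ p := by
    rw [← Real.mul_rpow hx.le ht.le]
    congr 1
    field_simp
  have hxp : (0:ℝ) ≤ x ^ p := Real.rpow_nonneg hx.le p
  have step1 : 1 - (y / x) ^ p ≤ (-p) * (y / x - 1) := by nlinarith
  calc x ^ p - y ^ p = x ^ p * (1 - (y / x) ^ p) := by rw [hsplit]; ring
    _ ≤ x ^ p * ((-p) * (y / x - 1)) := by
        apply mul_le_mul_of_nonneg_left step1 hxp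
    _ = (-p) * (x ^ p / x) * (y - x) := by
        have hxne : x ≠ 0 := hx.ne'
        field_simp

set_option maxHeartbeats 1000000 in
theorem stmt16 (s : ℝ) (hs₁ : -3/4 ≤ s) (hs₂ : s ≤ 0) : ∃ C > (0:ℝ),
    ∀ (N : ℝ) (m : ℝ → ℝ) (lam mu ξ₁ ξ₂ ξ₃ : ℝ) (k l : ℤ),
    1 ≤ N →
    (∀ ξ : ℝ, ξ ≠ 0 → m ξ = min 1 (N ^ (-s) * |ξ| ^ s)) → m 0 = 1 →
    lam = 2 ^ k → mu = 2 ^ l → lam ≤ mu → 1 ≤ mu →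
    ξ₁ + ξ₂ + ξ₃ = 0 →
    lam / 2 ≤ |ξ₁| → |ξ₁| ≤ 2 * lam →
    mu / 2 ≤ |ξ₂| → |ξ₂| ≤ 2 * mu →
    mu / 2 ≤ |ξ₃| → |ξ₃| ≤ 2 * mu →
    |m ξ₁ ^ 2 * ξ₁ + m ξ₂ ^ 2 * ξ₂ + m ξ₃ ^ 2 * ξ₃| ≤ C * m lam ^ 2 * lam := by
  refine ⟨1000, by norm_num, ?_⟩
  intro N m lam mu ξ₁ ξ₂ ξ₃ k l hN hm hm0 hlamd hmud hlm hmu1 hsum h1l h1u h2l h2u h3l h3u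
  have hN0 : (0:ℝ) < N := lt_of_lt_of_le one_pos hN
  have hlam0 : (0:ℝ) < lam := by rw [hlamd]; positivity
  have hmu0 : (0:ℝ) < mu := lt_of_lt_of_le one_pos hmu1
  set p : ℝ := 2 * s with hp
  have hp0 : p ≤ 0 := by rw [hp]; linarith
  have hpge : -(2:ℝ) ≤ p := by rw [hp]; linarith
  have hpge' : -p ≤ 3/2 := by rw [hp]; linarith
  set K : ℝ := N ^ (-p) with hK
  have hK0 : (0:ℝ) < K := Real.rpow_pos_of_pos hN0 _
  set M : ℝ → ℝ := fun t => min 1 (K * t ^ p) with hM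
  -- squaring the multiplier
  have hmsq : ∀ ξ : ℝ, ξ ≠ 0 → m ξ ^ 2 = M |ξ| := by
    intro ξ hξ
    have habs : (0:ℝ) < |ξ| := abs_pos.2 hξ
    have ha : (0:ℝ) ≤ N ^ (-s) * |ξ| ^ s := by positivity
    have hsq : (N ^ (-s) * |ξ| ^ s) ^ 2 = K * |ξ| ^ p := by
      have e1 : (N:ℝ) ^ (-s) * N ^ (-s) = N ^ (-p) := by
        rw [← Real.rpow_add hN0]; congr 1; rw [hp]; ring
      have e2 : |ξ| ^ s * |ξ| ^ s = |ξ| ^ p := by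
        rw [← Real.rpow_add habs]; congr 1; rw [hp]; ring
      calc (N ^ (-s) * |ξ| ^ s) ^ 2
          = (N ^ (-s) * N ^ (-s)) * (|ξ| ^ s * |ξ| ^ s) := by ring
        _ = K * |ξ| ^ p := by rw [e1, e2, hK]
    rw [hm ξ hξ]
    rcases le_total (N ^ (-s) * |ξ| ^ s) 1 with h | h
    · rw [min_eq_right h]
      have h2 : (N ^ (-s) * |ξ| ^ s) ^ 2 ≤ 1 := by nlinarith
      simp only [hM]
      rw [← hsq, min_eq_right h2]
    · rw [min_eq_left h]
      have h2 : 1 ≤ (N ^ (-s) * |ξ| ^ s) ^ 2 := by nlinarith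
      simp only [hM]
      rw [← hsq, min_eq_left h2, one_pow]
  -- basic facts about M
  have hM1 : ∀ t : ℝ, M t ≤ 1 := fun t => min_le_left _ _
  have hMnn : ∀ t : ℝ, 0 < t → 0 ≤ M t := by
    intro t ht
    exact le_min zero_le_one (by positivity)
  have hMlam0 : 0 ≤ M lam := hMnn lam hlam0
  have hManti : ∀ x y : ℝ, 0 < x → x ≤ y → M y ≤ M x := by
    intro x y hx hxy
    exact min_le_min le_rfl
      (mul_le_mul_of_nonneg_left (Real.rpow_le_rpow_of_nonpos hx hxy hp0) hK0.le)
  have hdouble : M (lam / 2) ≤ 4 * M lam := by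
    have h2p : (1:ℝ)/4 ≤ (2:ℝ) ^ p := by
      calc (1:ℝ)/4 = (2:ℝ) ^ ((-2:ℤ):ℝ) := by
            rw [Real.rpow_intCast]; norm_num
        _ ≤ (2:ℝ) ^ p := Real.rpow_le_rpow_of_exponent_le one_le_two (by push_cast; linarith)
    have h2p0 : (0:ℝ) < (2:ℝ) ^ p := Real.rpow_pos_of_pos two_pos _
    have hlp : (0:ℝ) ≤ lam ^ p := Real.rpow_nonneg hlam0.le _
    have h1 : (lam / 2) ^ p ≤ 4 * lam ^ p := by
      rw [Real.div_rpow hlam0.le (by norm_num : (0:ℝ) ≤ 2)]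
      rw [div_le_iff₀ h2p0]
      nlinarith
    have ha : (0:ℝ) ≤ K * lam ^ p := by positivity
    calc M (lam / 2) = min 1 (K * (lam / 2) ^ p) := rfl
      _ ≤ min 1 (4 * (K * lam ^ p)) := by
          apply min_le_min le_rfl
          nlinarith
      _ ≤ 4 * min 1 (K * lam ^ p) := by
          rcases le_total (K * lam ^ p) 1 with h | h
          · rw [min_eq_right h]; exact min_le_right _ _
          · rw [min_eq_left h]
            exact (min_le_left _ _).trans (by norm_num)
      _ = 4 * M lam := rfl
  -- nonzero frequencies
  have hξ₁ : ξ₁ ≠ 0 := by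
    intro h; rw [h, abs_zero] at h1l; linarith
  have hξ₂ : ξ₂ ≠ 0 := by
    intro h; rw [h, abs_zero] at h2l; linarith
  have hξ₃ : ξ₃ ≠ 0 := by
    intro h; rw [h, abs_zero] at h3l; linarith
  have hmlam : m lam ^ 2 = M lam := by
    rw [hmsq lam hlam0.ne', abs_of_pos hlam0]
  rw [hmsq ξ₁ hξ₁, hmsq ξ₂ hξ₂, hmsq ξ₃ hξ₃, hmlam]
  rcases le_total mu (8 * lam) with hcase | hcase
  · -- Case A : mu ≤ 8 lam, bound each term separately
    have key : ∀ ξ : ℝ, ξ ≠ 0 → lam / 2 ≤ |ξ| → |ξ| ≤ 16 * lam →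
        |M |ξ| * ξ| ≤ 64 * (M lam * lam) := by
      intro ξ hξ hξa hξb
      have habs : (0:ℝ) < |ξ| := abs_pos.2 hξ
      have ha : M |ξ| ≤ 4 * M lam :=
        le_trans (hManti (lam/2) |ξ| (by linarith) hξa) hdouble
      calc |M |ξ| * ξ| = M |ξ| * |ξ| := by
            rw [abs_mul, abs_of_nonneg (hMnn _ habs)]
        _ ≤ (4 * M lam) * (16 * lam) := by
            apply mul_le_mul ha hξb (abs_nonneg _) (by linarith)
        _ = 64 * (M lam * lam) := by ring
    have b1 : |M |ξ₁| * ξ₁| ≤ 64 * (M lam * lam) :=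
      key ξ₁ hξ₁ h1l (by linarith)
    have b2 : |M |ξ₂| * ξ₂| ≤ 64 * (M lam * lam) :=
      key ξ₂ hξ₂ (by linarith) (by linarith)
    have b3 : |M |ξ₃| * ξ₃| ≤ 64 * (M lam * lam) :=
      key ξ₃ hξ₃ (by linarith) (by linarith)
    have hMl : 0 ≤ M lam * lam := mul_nonneg hMlam0 hlam0.le
    calc |M |ξ₁| * ξ₁ + M |ξ₂| * ξ₂ + M |ξ₃| * ξ₃|
        ≤ |M |ξ₁| * ξ₁| + |M |ξ₂| * ξ₂| + |M |ξ₃| * ξ₃| := abs_add_three _ _ _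
      _ ≤ 192 * (M lam * lam) := by linarith
      _ ≤ 1000 * M lam * lam := by nlinarith
  · -- Case B : 8 lam ≤ mu
    have hlmu : lam ≤ mu / 4 := by linarith
    have hmu4 : (0:ℝ) < mu / 4 := by linarith
    have hKN : K * N ^ p = 1 := by
      rw [hK, ← Real.rpow_add hN0, neg_add_cancel, Real.rpow_zero]
    -- the key difference estimate
    have hP3 : ∀ x y : ℝ, mu / 4 ≤ x → x ≤ y →
        M x - M y ≤ 6 / mu * M lam * (y - x) := by
      intro x y hx hxy
      have hx0 : (0:ℝ) < x := lt_of_lt_of_le hmu4 hx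
      have hy0 : (0:ℝ) < y := hx0.trans_le hxy
      rcases le_total y N with hyN | hNy
      · -- both frequencies below threshold : M x = M y = 1
        have hxN : x ≤ N := hxy.trans hyN
        have h1 : 1 ≤ K * x ^ p := by
          rw [← hKN]
          exact mul_le_mul_of_nonneg_left
            (Real.rpow_le_rpow_of_nonpos hx0 hxN hp0) hK0.le
        have h2 : 1 ≤ K * y ^ p := by
          rw [← hKN]
          exact mul_le_mul_of_nonneg_left
            (Real.rpow_le_rpow_of_nonpos hy0 hyN hp0) hK0.le
        have e1 : M x = 1 := min_eq_left h1
        have e2 : M y = 1 := min_eq_left h2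
        rw [e1, e2, sub_self]
        have h6 : (0:ℝ) ≤ 6 / mu * M lam := by positivity
        nlinarith
      · set x' := max x N with hx'
        have hxx' : x ≤ x' := le_max_left _ _
        have hNx' : N ≤ x' := le_max_right _ _
        have hx'0 : (0:ℝ) < x' := hx0.trans_le hxx'
        have hx'y : x' ≤ y := max_le hxy hNy
        have hfx' : K * x' ^ p ≤ 1 := by
          rw [← hKN]
          exact mul_le_mul_of_nonneg_left
            (Real.rpow_le_rpow_of_nonpos hN0 hNx' hp0) hK0.le
        have hMx : M x ≤ K * x' ^ p := by
          rcases le_total x N with h | h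
          · have : x' = N := max_eq_right h
            rw [this, hKN]
            exact min_le_left _ _
          · have : x' = x := max_eq_left h
            rw [this]
            exact min_le_right _ _
        have hMy : M y = K * y ^ p := by
          apply min_eq_right
          rw [← hKN]
          exact mul_le_mul_of_nonneg_left
            (Real.rpow_le_rpow_of_nonpos hN0 hNy hp0) hK0.le
        have key := tangent_rpow_stmt16 hp0 hx'0 hx'y
        have hxp0 : (0:ℝ) ≤ K * x' ^ p := by positivity
        have h1 : M x - M y ≤ (-p) * (K * x' ^ p) * ((y - x') / x') := by
          have hK' := mul_le_mul_of_nonneg_left key hK0.le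
          have hmain : K * x' ^ p - K * y ^ p ≤ (-p) * (K * x' ^ p) * ((y - x') / x') := by
            calc K * x' ^ p - K * y ^ p = K * (x' ^ p - y ^ p) := by ring
              _ ≤ K * ((-p) * (x' ^ p / x') * (y - x')) := hK'
              _ = (-p) * (K * x' ^ p) * ((y - x') / x') := by ring
          rw [hMy]
          linarith
        have hMl : K * x' ^ p ≤ M lam := by
          refine le_min hfx' ?_
          exact mul_le_mul_of_nonneg_left
            (Real.rpow_le_rpow_of_nonpos hlam0 ((hlmu.trans hx).trans hxx') hp0) hK0.le
        have hfrac : (y - x') / x' ≤ 4 / mu * (y - x) := by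
          rw [div_eq_mul_inv]
          have h4 : x'⁻¹ ≤ 4 / mu := by
            rw [show (4:ℝ)/mu = (mu/4)⁻¹ by rw [inv_div]]
            exact inv_anti₀ hmu4 (hx.trans hxx')
          calc (y - x') * x'⁻¹ ≤ (y - x) * (4 / mu) := by
                apply mul_le_mul (by linarith) h4 (inv_nonneg.2 hx'0.le) (by linarith)
            _ = 4 / mu * (y - x) := mul_comm _ _
        have hfrac0 : 0 ≤ (y - x') / x' := by
          apply div_nonneg (by linarith) hx'0.le
        calc M x - M y ≤ (-p) * (K * x' ^ p) * ((y - x') / x') := h1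
          _ ≤ ((3/2) * M lam) * (4 / mu * (y - x)) := by
              apply mul_le_mul _ hfrac hfrac0 (by nlinarith)
              apply mul_le_mul hpge' hMl hxp0 (by norm_num)
          _ = 6 / mu * M lam * (y - x) := by ring
    -- set up the telescoping
    set b : ℝ := ξ₁ + ξ₂ with hb
    have hξ₃b : ξ₃ = -b := by rw [hb]; linarith
    have habs3 : |ξ₃| = |b| := by rw [hξ₃b, abs_neg]
    have hbl : mu / 4 ≤ |b| := by
      have h := abs_sub_abs_le_abs_sub ξ₂ b
      rw [show ξ₂ - b = -ξ₁ by rw [hb]; ring, abs_neg] at h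
      linarith
    have hbu : |b| ≤ 3 * mu := by
      calc |b| ≤ |ξ₁| + |ξ₂| := abs_add_le _ _
        _ ≤ 3 * mu := by linarith
    have hb0 : b ≠ 0 := by
      intro h; rw [h, abs_zero] at hbl; linarith
    -- term 1
    have t1 : |M |ξ₁| * ξ₁| ≤ 8 * (M lam * lam) := by
      have habs : (0:ℝ) < |ξ₁| := abs_pos.2 hξ₁
      have ha : M |ξ₁| ≤ 4 * M lam :=
        le_trans (hManti (lam/2) |ξ₁| (by linarith) h1l) hdouble
      calc |M |ξ₁| * ξ₁| = M |ξ₁| * |ξ₁| := by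
            rw [abs_mul, abs_of_nonneg (hMnn _ habs)]
        _ ≤ (4 * M lam) * (2 * lam) := by
            apply mul_le_mul ha h1u (abs_nonneg _) (by linarith)
        _ = 8 * (M lam * lam) := by ring
    -- term 2
    have t2 : |M |ξ₂| * (-ξ₁)| ≤ 2 * (M lam * lam) := by
      have habs : (0:ℝ) < |ξ₂| := abs_pos.2 hξ₂
      have ha : M |ξ₂| ≤ M lam := hManti lam |ξ₂| hlam0 (by linarith)
      calc |M |ξ₂| * (-ξ₁)| = M |ξ₂| * |ξ₁| := by
            rw [abs_mul, abs_neg, abs_of_nonneg (hMnn _ habs)]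
        _ ≤ M lam * (2 * lam) := by
            apply mul_le_mul ha h1u (abs_nonneg _) hMlam0
        _ = 2 * (M lam * lam) := by ring
    -- term 3 : the mean-value part
    have hyx : |(|ξ₂| - |b|)| ≤ 2 * lam := by
      have h := abs_abs_sub_abs_le_abs_sub ξ₂ b
      rw [show ξ₂ - b = -ξ₁ by rw [hb]; ring, abs_neg] at h
      linarith
    have hdiffb : |(M |ξ₂| - M |b|)| ≤ 6 / mu * M lam * (2 * lam) := by
      have h6 : (0:ℝ) ≤ 6 / mu * M lam := by positivity
      rcases le_total |ξ₂| |b| with h | h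
      · have hmono : M |b| ≤ M |ξ₂| := hManti |ξ₂| |b| (by linarith) h
        rw [abs_of_nonneg (by linarith)]
        have := hP3 |ξ₂| |b| (by linarith) h
        have hd : |b| - |ξ₂| ≤ 2 * lam := by
          rw [abs_sub_comm] at hyx
          exact le_trans (le_abs_self _) hyx
        nlinarith
      · have hmono : M |ξ₂| ≤ M |b| := hManti |b| |ξ₂| (by linarith) h
        rw [abs_of_nonpos (by linarith)]
        have := hP3 |b| |ξ₂| hbl h
        have hd : |ξ₂| - |b| ≤ 2 * lam := le_trans (le_abs_self _) hyx
        nlinarith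
    have t3 : |(M |ξ₂| - M |b|) * b| ≤ 36 * (M lam * lam) := by
      have h6 : (0:ℝ) ≤ 6 / mu * M lam * (2 * lam) := by positivity
      calc |(M |ξ₂| - M |b|) * b| = |(M |ξ₂| - M |b|)| * |b| := abs_mul _ _
        _ ≤ (6 / mu * M lam * (2 * lam)) * (3 * mu) := by
            apply mul_le_mul hdiffb hbu (abs_nonneg _) h6
        _ = 36 * (M lam * lam) := by field_simp; ring
    -- assemble
    have hsplit : M |ξ₁| * ξ₁ + M |ξ₂| * ξ₂ + M |ξ₃| * ξ₃
        = M |ξ₁| * ξ₁ + M |ξ₂| * (-ξ₁) + (M |ξ₂| - M |b|) * b := by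
      rw [habs3, hξ₃b, hb]; ring
    rw [hsplit]
    calc |M |ξ₁| * ξ₁ + M |ξ₂| * (-ξ₁) + (M |ξ₂| - M |b|) * b|
        ≤ |M |ξ₁| * ξ₁| + |M |ξ₂| * (-ξ₁)| + |(M |ξ₂| - M |b|) * b| := abs_add_three _ _ _
      _ ≤ 46 * (M lam * lam) := by linarith
      _ ≤ 1000 * M lam * lam := by nlinarith [mul_nonneg hMlam0 hlam0.le]
end

section
/- Let E²(t), E⁴(t) : [0,∞) → ℝ and ε₀ ∈ (0,1), N ≥ 1, and constants C₁, C₂ > 0 satisfy: (a) |E⁴(t) - E²(t)| ≤ C₁ ε₀³ whenever E²(t) ≤ 5ε₀², (b) E⁴ increases by at most C₂ε₀⁵N^{-15/4} on each unit time interval on which E² ≤ 5ε₀², (c) E²(0) = ε₀². Then for any integer M with C₂ M N^{-15/4} ≤ 1 and ε₀ small enough depending on C₁, C₂ (e.g. (2C₁+1)ε₀ ≤ 1), one has E²(t) ≤ 4ε₀² for all t ∈ [0, M]. -/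
theorem stmt19 (E2 E4 : ℝ → ℝ) (ε₀ N C₁ C₂ : ℝ) (M : ℕ)
    (hε₀ : 0 < ε₀) (hε₁ : ε₀ < 1) (hN : 1 ≤ N) (hC₁ : 0 < C₁) (hC₂ : 0 < C₂)
    (hcont : Continuous E2)
    (ha : ∀ t : ℝ, 0 ≤ t → E2 t ≤ 5 * ε₀ ^ 2 → |E4 t - E2 t| ≤ C₁ * ε₀ ^ 3)
    (hb : ∀ t₁ t₂ : ℝ, 0 ≤ t₁ → t₁ ≤ t₂ → t₂ ≤ t₁ + 1 →
      (∀ τ : ℝ, t₁ ≤ τ → τ ≤ t₂ → E2 τ ≤ 5 * ε₀ ^ 2) →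
      E4 t₂ ≤ E4 t₁ + C₂ * ε₀ ^ 5 * N ^ (-(15:ℝ)/4))
    (hc : E2 0 = ε₀ ^ 2)
    (hM : C₂ * M * N ^ (-(15:ℝ)/4) ≤ 1)
    (hsmall : (2 * C₁ + 1) * ε₀ ≤ 1) :
    ∀ t : ℝ, 0 ≤ t → t ≤ M → E2 t ≤ 4 * ε₀ ^ 2 := by
  have hNpos : (0:ℝ) < N := lt_of_lt_of_le one_pos hN
  have hrpow : (0:ℝ) < N ^ (-(15:ℝ)/4) := Real.rpow_pos_of_pos hNpos _
  set δ : ℝ := C₂ * ε₀ ^ 5 * N ^ (-(15:ℝ)/4) with hδdef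
  have hδpos : 0 < δ := by positivity
  have hε2pos : 0 < ε₀ ^ 2 := by positivity
  -- Key bootstrap improvement: if E2 ≤ 4ε₀² on [0,t], then E2 t ≤ 2ε₀².
  have key : ∀ t : ℝ, 0 ≤ t → t ≤ M →
      (∀ τ, 0 ≤ τ → τ ≤ t → E2 τ ≤ 4 * ε₀ ^ 2) → E2 t ≤ 2 * ε₀ ^ 2 := by
    intro t ht0 htM H
    have H5 : ∀ τ, 0 ≤ τ → τ ≤ t → E2 τ ≤ 5 * ε₀ ^ 2 := fun τ h1 h2 =>
      (H τ h1 h2).trans (by nlinarith)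
    have main : ∀ j : ℕ, ∀ s : ℝ, 0 ≤ s → s ≤ j → s ≤ t → E4 s ≤ E4 0 + j * δ := by
      intro j
      induction j with
      | zero =>
        intro s hs0 hsj _
        have hs : s = 0 := le_antisymm (by exact_mod_cast hsj) hs0
        subst hs; simp
      | succ j ih =>
        intro s hs0 hsj hst
        by_cases hcase : s ≤ j
        · have h1 := ih s hs0 hcase hst
          have h2 : (j:ℝ) * δ ≤ ((j:ℕ)+1:ℝ) * δ := by nlinarith
          push_cast
          push_cast at h1
          linarith
        · push_neg at hcase
          have hj0 : (0:ℝ) ≤ j := Nat.cast_nonneg j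
          have hjt : (j:ℝ) ≤ t := le_trans hcase.le hst
          have h1 : E4 s ≤ E4 j + δ := by
            refine hb j s hj0 hcase.le ?_ ?_
            · push_cast at hsj ⊢; linarith
            · intro τ hτ1 hτ2
              exact H5 τ (le_trans hj0 hτ1) (le_trans hτ2 hst)
          have h2 := ih j hj0 le_rfl hjt
          push_cast
          linarith
    have hE4t : E4 t ≤ E4 0 + M * δ := main M t ht0 htM le_rfl
    have hA0 := ha 0 le_rfl (by rw [hc]; nlinarith)
    have hAt := ha t ht0 (H5 t ht0 le_rfl)
    rw [abs_le] at hA0 hAt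
    have hMδ : (M:ℝ) * δ ≤ ε₀ ^ 5 := by
      have h5 : (0:ℝ) < ε₀ ^ 5 := by positivity
      rw [hδdef]
      nlinarith [hM]
    have hε53 : ε₀ ^ 5 ≤ ε₀ ^ 3 := pow_le_pow_of_le_one hε₀.le hε₁.le (by norm_num)
    have hsm : 2 * (C₁ * ε₀ ^ 3) + ε₀ ^ 3 ≤ ε₀ ^ 2 := by nlinarith
    rw [hc] at hA0
    linarith [hAt.1, hA0.2]
  -- Continuity argument
  by_contra hcon
  push_neg at hcon
  obtain ⟨t₀, ht₀0, ht₀M, ht₀⟩ := hcon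
  have hBclosed : IsClosed (Set.Icc (0:ℝ) M ∩ E2 ⁻¹' Set.Ici (3 * ε₀ ^ 2)) :=
    isClosed_Icc.inter (isClosed_Ici.preimage hcont)
  set B := Set.Icc (0:ℝ) M ∩ E2 ⁻¹' Set.Ici (3 * ε₀ ^ 2) with hBdef
  have hBne : B.Nonempty := ⟨t₀, ⟨ht₀0, ht₀M⟩, by simp only [Set.mem_preimage, Set.mem_Ici]; nlinarith⟩
  have hBbdd : BddBelow B := ⟨0, fun x hx => hx.1.1⟩
  set T := sInf B with hTdef
  have hTB : T ∈ B := hBclosed.csInf_mem hBne hBbdd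
  have hT0 : 0 ≤ T := hTB.1.1
  have hTM : T ≤ M := hTB.1.2
  have hTval : 3 * ε₀ ^ 2 ≤ E2 T := hTB.2
  have hTpos : 0 < T := by
    rcases hT0.lt_or_eq with h | h
    · exact h
    · exfalso
      rw [← h] at hTval
      rw [hc] at hTval
      nlinarith
  have hless : ∀ τ, 0 ≤ τ → τ < T → E2 τ < 3 * ε₀ ^ 2 := by
    intro τ h0 hτ
    by_contra h
    push_neg at h
    have hmem : τ ∈ B := ⟨⟨h0, le_trans hτ.le hTM⟩, h⟩
    exact absurd (csInf_le hBbdd hmem) (not_le.2 hτ)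
  have hTle : E2 T ≤ 3 * ε₀ ^ 2 := by
    have htend : Filter.Tendsto E2 (nhdsWithin T (Set.Iio T)) (nhds (E2 T)) :=
      (hcont.tendsto T).mono_left nhdsWithin_le_nhds
    refine le_of_tendsto htend ?_
    have hIoo : Set.Ioo (0:ℝ) T ∈ nhdsWithin T (Set.Iio T) :=
      Ioo_mem_nhdsLT_of_mem ⟨hTpos, le_rfl⟩
    filter_upwards [hIoo] with τ hτ
    exact (hless τ hτ.1.le hτ.2).le
  have hHT : ∀ τ, 0 ≤ τ → τ ≤ T → E2 τ ≤ 4 * ε₀ ^ 2 := by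
    intro τ h0 hτ
    rcases hτ.lt_or_eq with h | h
    · linarith [hless τ h0 h, hε2pos]
    · rw [h]; linarith [hTle, hε2pos]
  have hfinal := key T hT0 hTM hHT
  linarith [hε2pos]
end
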